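/- Let g be a finite-dimensional complex semisimple Lie algebra, and let s ⊂ g be a k-dimensional abelian Lie subalgebra. Then the line [s] = ∧^k s ⊂ ∧^k g is an eigenspace for the Casimir element Cas (normalized via the Killing form) with eigenvalue k. Consequently the maximal eigenvalue of Cas on ∧^k g equals k whenever g contains a k-dimensional abelian subalgebra. -/

import Mathlib

set_option linter.unusedSectionVars false


open ExteriorAlgebra

section Aux

variable {L : Type*} [LieRing L] [LieAlgebra ℂ L]

/-- A derivation of the exterior algebra acting through `ι` by `x ↦ ⁅x, ·⁆` acts on `ιMulti`
as a sum over slots. -/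
private lemma aux_deriv
    (ρ : L → Module.End ℂ (ExteriorAlgebra ℂ L))
    (hρι : ∀ x y : L, ρ x (ι ℂ y) = ι ℂ ⁅x, y⁆)
    (hρmul : ∀ x u v, ρ x (u * v) = ρ x u * v + u * ρ x v)
    (hρone : ∀ x, ρ x 1 = 0) (x : L) :
    ∀ (n : ℕ) (v : Fin n → L),
      ρ x (ιMulti ℂ n v) = ∑ j, ιMulti ℂ n (Function.update v j ⁅x, v j⁆) := by
  intro n
  induction n with
  | zero =>
      intro v
      simp [ιMulti_zero_apply, hρone]
  | succ n ih =>
      intro v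
      have htail : Matrix.vecTail v = Fin.tail v := rfl
      rw [ιMulti_succ_apply, hρmul, hρι, Fin.sum_univ_succ]
      have h0 : ιMulti ℂ (n + 1) (Function.update v 0 ⁅x, v 0⁆) =
          ι ℂ ⁅x, v 0⁆ * ιMulti ℂ n (Matrix.vecTail v) := by
        rw [ιMulti_succ_apply, Function.update_self]
        congr 1
      have hs : ∀ j : Fin n, ιMulti ℂ (n + 1) (Function.update v j.succ ⁅x, v j.succ⁆) =
          ι ℂ (v 0) * ιMulti ℂ n (Function.update (Fin.tail v) j ⁅x, Fin.tail v j⁆) := by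
        intro j
        rw [ιMulti_succ_apply, Function.update_of_ne (Fin.succ_ne_zero j).symm]
        congr 1
        show ιMulti ℂ n (Fin.tail (Function.update v j.succ ⁅x, v j.succ⁆)) = _
        rw [Fin.tail_update_succ]
        rfl
      rw [h0, ih (Matrix.vecTail v), Finset.mul_sum]
      congr 1
      refine Finset.sum_congr rfl fun j _ => ?_
      rw [hs j, htail]

variable [Module.Finite ℂ L]
variable {κ : Type*} [Fintype κ] [DecidableEq κ] (b b' : κ → L)

/-- Expansion in the basis `b` with coefficients given by pairing against `b'`. -/
private lemma aux_expand_b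
    (hdual : ∀ i j, killingForm ℂ L (b i) (b' j) = if i = j then 1 else 0)
    (hbasis : Submodule.span ℂ (Set.range b) = ⊤) (z : L) :
    ∑ m, killingForm ℂ L z (b' m) • b m = z := by
  classical
  have hz : z ∈ Submodule.span ℂ (Set.range b) := by rw [hbasis]; trivial
  obtain ⟨c, rfl⟩ := (Submodule.mem_span_range_iff_exists_fun ℂ).mp hz
  have hcoef : ∀ m, killingForm ℂ L (∑ i, c i • b i) (b' m) = c m := by
    intro m
    rw [map_sum, LinearMap.sum_apply]
    simp only [map_smul, LinearMap.smul_apply, hdual, smul_eq_mul]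
    simp [Finset.sum_ite_eq', mul_ite]
  simp only [hcoef]

/-- Nondegeneracy extracted from the dual-basis hypothesis. -/
private lemma aux_eq_zero
    (hdual : ∀ i j, killingForm ℂ L (b i) (b' j) = if i = j then 1 else 0)
    (hbasis : Submodule.span ℂ (Set.range b) = ⊤) (z : L)
    (h : ∀ j, killingForm ℂ L (b j) z = 0) : z = 0 := by
  have hy : ∀ y : L, killingForm ℂ L y z = 0 := by
    intro y
    have hyz : y ∈ Submodule.span ℂ (Set.range b) := by rw [hbasis]; trivial
    induction hyz using Submodule.span_induction with
    | mem x hx => obtain ⟨j, rfl⟩ := hx; exact h j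
    | zero => simp
    | add u v _ _ hu hv => rw [map_add, LinearMap.add_apply, hu, hv, add_zero]
    | smul c u _ hu => rw [map_smul, LinearMap.smul_apply, hu, smul_zero]
  have := aux_expand_b b b' hdual hbasis z
  rw [← this]
  refine Finset.sum_eq_zero fun m _ => ?_
  rw [LieModule.traceForm_comm, hy (b' m), zero_smul]

/-- Expansion in the family `b'` with coefficients given by pairing against `b`. -/
private lemma aux_expand_b'
    (hdual : ∀ i j, killingForm ℂ L (b i) (b' j) = if i = j then 1 else 0)
    (hbasis : Submodule.span ℂ (Set.range b) = ⊤) (z : L) :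
    ∑ m, killingForm ℂ L z (b m) • b' m = z := by
  classical
  have key : ∀ j, killingForm ℂ L (b j) (z - ∑ m, killingForm ℂ L z (b m) • b' m) = 0 := by
    intro j
    rw [map_sub]
    simp only [map_sum, map_smul, smul_eq_mul, hdual]
    have : ∑ m, killingForm ℂ L z (b m) * (if j = m then 1 else 0) = killingForm ℂ L z (b j) := by
      simp [Finset.sum_ite_eq, mul_ite]
    rw [this, LieModule.traceForm_comm, sub_self]
  have := aux_eq_zero b b' hdual hbasis _ key
  have h2 := sub_eq_zero.mp this
  linear_combination (norm := module) - h2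

/-- Invariance of the "inverse Killing tensor" `∑ bᵢ ⊗ b'ᵢ`. -/
private lemma aux_inv
    (hdual : ∀ i j, killingForm ℂ L (b i) (b' j) = if i = j then 1 else 0)
    (hbasis : Submodule.span ℂ (Set.range b) = ⊤)
    {M : Type*} [AddCommGroup M] [Module ℂ M]
    (B : L →ₗ[ℂ] L →ₗ[ℂ] M) (x : L) :
    ∑ i, B ⁅x, b i⁆ (b' i) = - ∑ i, B (b i) ⁅x, b' i⁆ := by
  classical
  have h1 : ∀ i, B ⁅x, b i⁆ (b' i) =
      ∑ m, killingForm ℂ L ⁅x, b i⁆ (b' m) • B (b m) (b' i) := by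
    intro i
    conv_lhs => rw [← aux_expand_b b b' hdual hbasis ⁅x, b i⁆]
    rw [map_sum, LinearMap.sum_apply]
    simp [LinearMap.smul_apply]
  have h2 : ∀ i, B (b i) ⁅x, b' i⁆ =
      ∑ m, killingForm ℂ L ⁅x, b' i⁆ (b m) • B (b i) (b' m) := by
    intro i
    conv_lhs => rw [← aux_expand_b' b b' hdual hbasis ⁅x, b' i⁆]
    rw [map_sum]
    simp
  have hsum : (∑ i, B ⁅x, b i⁆ (b' i)) + (∑ i, B (b i) ⁅x, b' i⁆) = 0 := by
    calc (∑ i, B ⁅x, b i⁆ (b' i)) + (∑ i, B (b i) ⁅x, b' i⁆)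
        = (∑ i, ∑ m, killingForm ℂ L ⁅x, b i⁆ (b' m) • B (b m) (b' i))
          + (∑ m, ∑ i, killingForm ℂ L ⁅x, b' m⁆ (b i) • B (b m) (b' i)) := by
          rw [Finset.sum_congr rfl fun i _ => h1 i, Finset.sum_congr rfl fun i _ => h2 i,
            Finset.sum_comm]
      _ = ∑ i, ∑ m, (killingForm ℂ L ⁅x, b i⁆ (b' m)
            + killingForm ℂ L ⁅x, b' m⁆ (b i)) • B (b m) (b' i) := by
          rw [Finset.sum_comm (f := fun m i => killingForm ℂ L ⁅x, b' m⁆ (b i) • B (b m) (b' i))]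
          rw [← Finset.sum_add_distrib]
          refine Finset.sum_congr rfl fun i _ => ?_
          rw [← Finset.sum_add_distrib]
          refine Finset.sum_congr rfl fun m _ => ?_
          rw [add_smul]
      _ = 0 := by
          refine Finset.sum_eq_zero fun i _ => Finset.sum_eq_zero fun m _ => ?_
          have ha : killingForm ℂ L ⁅x, b i⁆ (b' m) = killingForm ℂ L x ⁅b i, b' m⁆ :=
            LieModule.traceForm_apply_lie_apply ℂ L L x (b i) (b' m)
          have hb2 : killingForm ℂ L ⁅x, b' m⁆ (b i) = killingForm ℂ L x ⁅b' m, b i⁆ :=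
            LieModule.traceForm_apply_lie_apply ℂ L L x (b' m) (b i)
          rw [ha, hb2, ← lie_skew (b i) (b' m), map_neg, neg_add_cancel, zero_smul]
  exact eq_neg_of_add_eq_zero_left hsum

/-- Trace formula with respect to the dual bases. -/
private lemma aux_trace
    (hdual : ∀ i j, killingForm ℂ L (b i) (b' j) = if i = j then 1 else 0)
    (hbasis : Submodule.span ℂ (Set.range b) = ⊤)
    (f : Module.End ℂ L) :
    ∑ i, killingForm ℂ L (b i) (f (b' i)) = LinearMap.trace ℂ L f := by
  classical
  have hli : LinearIndependent ℂ b' := by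
    rw [Fintype.linearIndependent_iff]
    intro g hg j
    have := congrArg (fun z => killingForm ℂ L (b j) z) hg
    simp only [map_sum, map_smul, smul_eq_mul, hdual, map_zero] at this
    simpa [Finset.sum_ite_eq, mul_ite] using this
  have hspan : ⊤ ≤ Submodule.span ℂ (Set.range b') := by
    intro z _
    rw [← aux_expand_b' b b' hdual hbasis z]
    exact Submodule.sum_mem _ fun m _ =>
      Submodule.smul_mem _ _ (Submodule.subset_span ⟨m, rfl⟩)
  let B' : Module.Basis κ ℂ L := Module.Basis.mk hli hspan
  have hrepr : ∀ (z : L) (i : κ), B'.repr z i = killingForm ℂ L (b i) z := by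
    intro z i
    conv_rhs => rw [← B'.sum_repr z]
    simp only [map_sum, map_smul, smul_eq_mul]
    have hB' : ∀ j, (B' j : L) = b' j := fun j => Module.Basis.mk_apply hli hspan j
    simp only [hB', hdual]
    simp [Finset.sum_ite_eq, mul_ite]
  rw [LinearMap.trace_eq_matrix_trace ℂ B' f, Matrix.trace]
  refine (Finset.sum_congr rfl fun i _ => ?_).symm
  rw [Matrix.diag_apply, LinearMap.toMatrix_apply, hrepr, Module.Basis.mk_apply]

/-- The Casimir operator of the adjoint representation is the identity. -/
private lemma aux_cas
    (hdual : ∀ i j, killingForm ℂ L (b i) (b' j) = if i = j then 1 else 0)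
    (hbasis : Submodule.span ℂ (Set.range b) = ⊤) (x : L) :
    ∑ i, ⁅b i, ⁅b' i, x⁆⁆ = x := by
  classical
  have key : ∀ j, killingForm ℂ L (b j) ((∑ i, ⁅b i, ⁅b' i, x⁆⁆) - x) = 0 := by
    intro j
    rw [map_sub]
    have h1 : killingForm ℂ L (b j) (∑ i, ⁅b i, ⁅b' i, x⁆⁆)
        = ∑ i, killingForm ℂ L (b i) (((LieAlgebra.ad ℂ L (b j)).comp
            (LieAlgebra.ad ℂ L x) : Module.End ℂ L) (b' i)) := by
      rw [map_sum]
      refine Finset.sum_congr rfl fun i _ => ?_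
      rw [LieModule.traceForm_comm]
      rw [LieModule.traceForm_apply_lie_apply ℂ L L (b i) ⁅b' i, x⁆ (b j)]
      congr 1
      simp only [LinearMap.comp_apply, LieAlgebra.ad_apply]
      rw [← lie_skew ⁅b' i, x⁆ (b j)]
      rw [← lie_skew (b' i) x, lie_neg, neg_neg]
    rw [h1, aux_trace b b' hdual hbasis _]
    rw [killingForm_apply_apply]
    rw [sub_self]
  have h0 := aux_eq_zero b b' hdual hbasis _ key
  exact sub_eq_zero.mp h0

end Aux

section Slot

variable {L : Type*} [AddCommGroup L] [Module ℂ L]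
variable {N : Type*} [AddCommGroup N] [Module ℂ N]

/-- The bilinear map obtained by inserting elements into two fixed distinct slots of an
alternating map, with the second insertion twisted by a linear map `φ`. -/
private noncomputable def slotMap {n : ℕ} (m : L [⋀^Fin n]→ₗ[ℂ] N) (v : Fin n → L)
    {l j : Fin n} (h : j ≠ l) (φ : L →ₗ[ℂ] L) : L →ₗ[ℂ] L →ₗ[ℂ] N :=
  LinearMap.mk₂ ℂ (fun a c => m (Function.update (Function.update v j (φ c)) l a))
    (fun a₁ a₂ c => by rw [m.map_update_add])
    (fun r a c => by rw [m.map_update_smul])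
    (fun a c₁ c₂ => by
      rw [map_add, Function.update_comm h (φ c₁ + φ c₂) a v, m.map_update_add,
        ← Function.update_comm h (φ c₁) a v, ← Function.update_comm h (φ c₂) a v])
    (fun r a c => by
      rw [map_smul, Function.update_comm h (r • φ c) a v, m.map_update_smul,
        ← Function.update_comm h (φ c) a v])

private lemma slotMap_apply {n : ℕ} (m : L [⋀^Fin n]→ₗ[ℂ] N) (v : Fin n → L)
    {l j : Fin n} (h : j ≠ l) (φ : L →ₗ[ℂ] L) (a c : L) :
    slotMap m v h φ a c = m (Function.update (Function.update v j (φ c)) l a) := rfl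

/-- Swapping the contents of two distinct slots of an alternating map changes the sign. -/
private lemma aux_swap {n : ℕ} (m : L [⋀^Fin n]→ₗ[ℂ] N) (v : Fin n → L)
    {l j : Fin n} (h : l ≠ j) (x y : L) :
    m (Function.update (Function.update v j y) l x)
      = - m (Function.update (Function.update v j x) l y) := by
  have hs := m.map_swap (v := Function.update (Function.update v j x) l y) h
  rw [← hs]
  congr 1
  funext i
  rcases eq_or_ne i l with rfl | hil
  · simp [Function.update_apply, Equiv.swap_apply_left, h, h.symm]
  · rcases eq_or_ne i j with rfl | hij
    · simp [Function.update_apply, Equiv.swap_apply_right, h, h.symm, hil]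
    · have hswap : Equiv.swap l j i = i := Equiv.swap_apply_of_ne_of_ne hil hij
      simp [Function.update_apply, hswap, hil, hij]

end Slot

/-- Let `g` be a finite-dimensional complex semisimple Lie algebra acting on its exterior
algebra by the adjoint action `ρ`, with Casimir operator `Cas = ∑ᵢ ρ(bᵢ) ρ(b'ᵢ)` (`b`, `b'`
dual bases for the Killing form).  If `s ⊂ g` is a `k`-dimensional abelian subalgebra with
basis `w₁, …, w_k`, then the line `[s] = ℂ·(w₁ ∧ ⋯ ∧ w_k) ⊂ ∧^k g` is a (nonzero)
eigenspace of `Cas` with eigenvalue `k`; in particular `k` is an eigenvalue of `Cas` on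
`∧^k g`, and by the bound `≤ k` it is the maximal one. -/
theorem casimir_eigenvalue_of_abelian_subalgebra
    {L : Type*} [LieRing L] [LieAlgebra ℂ L] [Module.Finite ℂ L]
    [LieAlgebra.IsSemisimple ℂ L]
    {κ : Type*} [Fintype κ] [DecidableEq κ] (b b' : κ → L)
    (hdual : ∀ i j, killingForm ℂ L (b i) (b' j) = if i = j then 1 else 0)
    (hbasis : Submodule.span ℂ (Set.range b) = ⊤)
    (ρ : L → Module.End ℂ (ExteriorAlgebra ℂ L))
    (hρι : ∀ x y : L, ρ x (ι ℂ y) = ι ℂ ⁅x, y⁆)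
    (hρmul : ∀ x u v, ρ x (u * v) = ρ x u * v + u * ρ x v)
    (hρone : ∀ x, ρ x 1 = 0)
    (k : ℕ) (w : Fin k → L) (hw : LinearIndependent ℂ w)
    (habelian : ∀ i j, ⁅w i, w j⁆ = 0) :
    (∑ i, ρ (b i) * ρ (b' i)) ((List.ofFn fun i => ι ℂ (w i)).prod) =
        (k : ℂ) • (List.ofFn fun i => ι ℂ (w i)).prod ∧
      (List.ofFn fun i => ι ℂ (w i)).prod ≠ 0 ∧
      Module.End.HasEigenvalue (∑ i, ρ (b i) * ρ (b' i)) (k : ℂ) := by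
  classical
  -- Abbreviation: the wedge product as an alternating map
  set m : L [⋀^Fin k]→ₗ[ℂ] ExteriorAlgebra ℂ L := ιMulti ℂ k with hm
  -- Nonvanishing of the wedge of a linearly independent family
  have hne : ιMulti ℂ k w ≠ 0 := by
    have hinj : Function.Injective w := hw.injective
    have hs : LinearIndepOn ℂ id (Set.range w) := (linearIndepOn_id_range_iff hinj).mpr hw
    let B := Module.Basis.extend hs
    have hmem : ∀ i : Fin k, w i ∈ hs.extend (Set.subset_univ (Set.range w)) := fun i =>
      hs.subset_extend _ ⟨i, rfl⟩
    let g : L →ₗ[ℂ] (Fin k → ℂ) := LinearMap.pi fun j => B.coord ⟨w j, hmem j⟩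
    have hg : ∀ i j, g (w i) j = if i = j then 1 else 0 := by
      intro i j
      have hwi : w i = B ⟨w i, hmem i⟩ := (Module.Basis.extend_apply_self hs ⟨w i, hmem i⟩).symm
      show B.repr (w i) ⟨w j, hmem j⟩ = _
      rw [hwi, Module.Basis.repr_self, Finsupp.single_apply]
      by_cases h : i = j
      · subst h; simp
      · have hne' : (⟨w i, hmem i⟩ : {x // x ∈ hs.extend (Set.subset_univ (Set.range w))})
            ≠ ⟨w j, hmem j⟩ := fun he => h (hinj (congrArg Subtype.val he))
        simp [h, hne']
    let φ : L [⋀^Fin k]→ₗ[ℂ] ℂ :=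
      (Matrix.detRowAlternating : (Fin k → ℂ) [⋀^Fin k]→ₗ[ℂ] ℂ).compLinearMap g
    have hφw : φ w = 1 := by
      have hgw : g ∘ w = (1 : Matrix (Fin k) (Fin k) ℂ) := by
        funext i j
        show g (w i) j = _
        rw [hg i j, Matrix.one_apply]
      show Matrix.detRowAlternating (g ∘ w) = 1
      rw [hgw]
      show Matrix.det (1 : Matrix (Fin k) (Fin k) ℂ) = 1
      exact Matrix.det_one
    intro h0
    have h1 : ExteriorAlgebra.liftAlternating
        (Function.update (fun n => (0 : L [⋀^Fin n]→ₗ[ℂ] ℂ)) k φ) (ιMulti ℂ k w) = 1 := by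
      rw [liftAlternating_apply_ιMulti, Function.update_self, hφw]
    rw [h0, map_zero] at h1
    exact one_ne_zero h1.symm
  -- The key Casimir eigenvalue computation
  have hstep : ∀ (x : L) (v : Fin k → L),
      ρ x (ιMulti ℂ k v) = ∑ j, ιMulti ℂ k (Function.update v j ⁅x, v j⁆) :=
    fun x v => aux_deriv ρ hρι hρmul hρone x k v
  have key : (∑ i, ρ (b i) * ρ (b' i)) (ιMulti ℂ k w) = (k : ℂ) • ιMulti ℂ k w := by
    have expand : ∀ i : κ, (ρ (b i) * ρ (b' i)) (ιMulti ℂ k w)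
        = ∑ j, ∑ l, ιMulti ℂ k (Function.update (Function.update w j ⁅b' i, w j⁆) l
            ⁅b i, Function.update w j ⁅b' i, w j⁆ l⁆) := by
      intro i
      rw [Module.End.mul_apply, hstep, map_sum]
      exact Finset.sum_congr rfl fun j _ => hstep (b i) _
    rw [LinearMap.sum_apply]
    rw [Finset.sum_congr rfl fun i _ => expand i]
    have hsplit : ∀ (i : κ) (j : Fin k),
        (∑ l, ιMulti ℂ k (Function.update (Function.update w j ⁅b' i, w j⁆) l
            ⁅b i, Function.update w j ⁅b' i, w j⁆ l⁆))
        = (∑ l ∈ Finset.univ.erase j,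
            ιMulti ℂ k (Function.update (Function.update w j ⁅b' i, w j⁆) l ⁅b i, w l⁆))
          + ιMulti ℂ k (Function.update w j ⁅b i, ⁅b' i, w j⁆⁆) := by
      intro i j
      rw [← Finset.sum_erase_add _ _ (Finset.mem_univ j)]
      congr 1
      · exact Finset.sum_congr rfl fun l hl => by
          rw [Function.update_of_ne (Finset.ne_of_mem_erase hl)]
      · rw [Function.update_self, Function.update_idem]
    rw [Finset.sum_congr rfl fun i _ => Finset.sum_congr rfl fun j _ => hsplit i j]
    rw [Finset.sum_congr rfl fun i (_ : i ∈ Finset.univ) => Finset.sum_add_distrib,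
      Finset.sum_add_distrib]
    have hdiag : (∑ i : κ, ∑ j : Fin k, ιMulti ℂ k (Function.update w j ⁅b i, ⁅b' i, w j⁆⁆))
        = (k : ℂ) • ιMulti ℂ k w := by
      rw [Finset.sum_comm]
      have hj : ∀ j : Fin k,
          (∑ i : κ, ιMulti ℂ k (Function.update w j ⁅b i, ⁅b' i, w j⁆⁆)) = ιMulti ℂ k w := by
        intro j
        rw [← (ιMulti ℂ k).map_update_sum Finset.univ j (fun i => ⁅b i, ⁅b' i, w j⁆⁆) w]
        rw [aux_cas b b' hdual hbasis (w j), Function.update_eq_self]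
      rw [Finset.sum_congr rfl fun j _ => hj j]
      rw [Finset.sum_const, Finset.card_univ, Fintype.card_fin, ← Nat.cast_smul_eq_nsmul ℂ]
    have hoff : (∑ i : κ, ∑ j : Fin k, ∑ l ∈ Finset.univ.erase j,
        ιMulti ℂ k (Function.update (Function.update w j ⁅b' i, w j⁆) l ⁅b i, w l⁆)) = 0 := by
      set T : Fin k → Fin k → ExteriorAlgebra ℂ L := fun j l =>
        ∑ i : κ, ιMulti ℂ k (Function.update (Function.update w j ⁅b' i, w j⁆) l ⁅b i, w l⁆)
        with hT
      have hcomm : (∑ i : κ, ∑ j : Fin k, ∑ l ∈ Finset.univ.erase j,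
          ιMulti ℂ k (Function.update (Function.update w j ⁅b' i, w j⁆) l ⁅b i, w l⁆))
          = ∑ j : Fin k, ∑ l ∈ Finset.univ.erase j, T j l := by
        rw [Finset.sum_comm]
        exact Finset.sum_congr rfl fun j _ => Finset.sum_comm
      rw [hcomm]
      have hTT : ∀ j l : Fin k, l ≠ j → T j l = - T l j := by
        intro j l hlj
        have hjl : j ≠ l := hlj.symm
        set φ₁ : L →ₗ[ℂ] L := -(LieAlgebra.ad ℂ L (w j)) with hφ₁
        have hφ₁a : ∀ c : L, φ₁ c = ⁅c, w j⁆ := fun c => by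
          rw [hφ₁, LinearMap.neg_apply, LieAlgebra.ad_apply, lie_skew]
        set φ₂ : L →ₗ[ℂ] L := LieAlgebra.ad ℂ L (w l) with hφ₂
        have hφ₂a : ∀ c : L, φ₂ c = ⁅w l, c⁆ := fun c => rfl
        have hB₁ : ∀ a c : L, slotMap m w hjl φ₁ a c
            = m (Function.update (Function.update w j ⁅c, w j⁆) l a) := fun a c => by
          rw [slotMap_apply, hφ₁a]
        have hB₂ : ∀ a c : L, slotMap m w hjl φ₂ a c
            = m (Function.update (Function.update w j ⁅w l, c⁆) l a) := fun a c => by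
          rw [slotMap_apply, hφ₂a]
        have hneg2 : ∀ X Y : L, m (Function.update (Function.update w j (-X)) l (-Y))
            = m (Function.update (Function.update w j X) l Y) := by
          intro X Y
          rw [m.map_update_neg, Function.update_comm hjl (-X) Y w, m.map_update_neg,
            ← Function.update_comm hjl X Y w, neg_neg]
        have c1 : T j l = ∑ i, -(slotMap m w hjl φ₁ ⁅w l, b i⁆ (b' i)) := by
          simp only [hT]
          refine Finset.sum_congr rfl fun i _ => ?_
          rw [← lie_skew (b i) (w l), m.map_update_neg, hB₁]
        have c2 : T j l = ∑ i, slotMap m w hjl φ₁ (b i) ⁅w l, b' i⁆ := by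
          rw [c1, Finset.sum_neg_distrib, aux_inv b b' hdual hbasis _ (w l), neg_neg]
        have c3 : T j l = ∑ i, -(slotMap m w hjl φ₂ (b i) ⁅w j, b' i⁆) := by
          rw [c2]
          refine Finset.sum_congr rfl fun i _ => ?_
          rw [hB₁, hB₂]
          have hjac : ⁅⁅w l, b' i⁆, w j⁆ = -⁅w l, ⁅w j, b' i⁆⁆ := by
            rw [lie_lie, habelian l j, lie_zero, sub_zero, ← lie_skew (b' i) (w j), lie_neg]
          rw [hjac]
          rw [Function.update_comm hjl (-⁅w l, ⁅w j, b' i⁆⁆) (b i) w, m.map_update_neg,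
            ← Function.update_comm hjl ⁅w l, ⁅w j, b' i⁆⁆ (b i) w]
        have c4 : T j l = ∑ i, slotMap m w hjl φ₂ ⁅w j, b i⁆ (b' i) := by
          rw [c3, Finset.sum_neg_distrib, ← aux_inv b b' hdual hbasis _ (w j)]
        have c5 : T j l
            = ∑ i, m (Function.update (Function.update w j ⁅w l, b' i⁆) l ⁅w j, b i⁆) := by
          rw [c4]
          exact Finset.sum_congr rfl fun i _ => hB₂ _ _
        have hTlj : T l j
            = ∑ i, m (Function.update (Function.update w j ⁅w j, b i⁆) l ⁅w l, b' i⁆) := by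
          simp only [hT]
          refine Finset.sum_congr rfl fun i _ => ?_
          rw [Function.update_comm hlj ⁅b' i, w l⁆ ⁅b i, w j⁆ w,
            ← lie_skew (b i) (w j), ← lie_skew (b' i) (w l), hneg2]
        calc T j l
            = ∑ i, m (Function.update (Function.update w j ⁅w l, b' i⁆) l ⁅w j, b i⁆) := c5
          _ = ∑ i, -(m (Function.update (Function.update w j ⁅w j, b i⁆) l ⁅w l, b' i⁆)) :=
              Finset.sum_congr rfl fun i _ => aux_swap m w hlj _ _
          _ = - T l j := by rw [Finset.sum_neg_distrib, hTlj]
      have hF : ∀ j : Fin k, (∑ l ∈ Finset.univ.erase j, T j l)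
          = ∑ l : Fin k, (if l = j then 0 else T j l) := by
        intro j
        rw [← Finset.sum_erase_add _ _ (Finset.mem_univ j), if_pos rfl, add_zero]
        exact (Finset.sum_congr rfl fun l hl => by
          rw [if_neg (Finset.ne_of_mem_erase hl)]).symm
      rw [Finset.sum_congr rfl fun j _ => hF j]
      rw [← Finset.sum_product']
      refine Finset.sum_ninvolution Prod.swap ?_ ?_ ?_ ?_
      · intro p
        by_cases h : p.2 = p.1
        · simp [h]
        · simp only [Prod.fst_swap, Prod.snd_swap, if_neg h, if_neg (Ne.symm h)]
          rw [hTT p.1 p.2 h, neg_add_cancel]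
      · intro p hp hswap
        apply hp
        have : p.2 = p.1 := by
          have := congrArg Prod.fst hswap
          simpa using this
        simp [this]
      · intro p
        simp [Finset.mem_product]
      · intro p
        exact Prod.swap_swap p
    rw [hoff, hdiag, zero_add]
  rw [← ιMulti_apply]
  exact ⟨key, hne, Module.End.hasEigenvalue_of_hasEigenvector
    ⟨Module.End.mem_eigenspace_iff.mpr key, hne⟩⟩
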